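/- Let K be a field and let R be a local subring of K that is henselian and whose fraction field is K, with R ≠ K. Define the R-adic topology on K to have as basis the sets aR + b for a ∈ K^×, b ∈ K. Then this topology makes K a (Hausdorff, nondiscrete) topological field, i.e., addition, multiplication, and inversion (on K^×) are continuous. -/

import Mathlib

open TopologicalSpace Filter Topology

section aux
variable {K : Type*} [Field K] (R : Subring K)

private def adicSubgroup (a : {a : K // a ≠ 0}) : AddSubgroup K where
  carrier := {x | ∃ r : R, x = a.1 * (r : K)}
  zero_mem' := ⟨0, by simp⟩
  add_mem' := by rintro x y ⟨r, rfl⟩ ⟨s, rfl⟩; exact ⟨r + s, by push_cast; ring⟩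
  neg_mem' := by rintro x ⟨r, rfl⟩; exact ⟨-r, by push_cast; ring⟩

private lemma mem_adicSubgroup (a : {a : K // a ≠ 0})
    (x : K) : x ∈ adicSubgroup R a ↔ ∃ r : R, x = a.1 * (r : K) := Iff.rfl

variable [IsFractionRing R K]

private lemma adic_surj (z : K) : ∃ p q : R, (q : K) ≠ 0 ∧ z * q = p := by
  obtain ⟨⟨p, q⟩, h⟩ := IsLocalization.surj (nonZeroDivisors R) z
  refine ⟨p, q, ?_, h⟩
  have : (q : R) ≠ 0 := nonZeroDivisors.ne_zero q.2
  exact_mod_cast this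

private lemma adic_basis : RingSubgroupsBasis (adicSubgroup R) := by
  apply RingSubgroupsBasis.of_comm
  · rintro ⟨a, ha⟩ ⟨c, hc⟩
    obtain ⟨p, q, hq, hpq⟩ := adic_surj R a
    obtain ⟨p', q', hq', hpq'⟩ := adic_surj R c
    have hp : (p : K) ≠ 0 := by rw [← hpq]; exact mul_ne_zero ha hq
    have hp' : (p' : K) ≠ 0 := by rw [← hpq']; exact mul_ne_zero hc hq'
    refine ⟨⟨(p : K) * p', mul_ne_zero hp hp'⟩, ?_⟩
    rintro x ⟨r, rfl⟩
    constructor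
    · exact ⟨q * p' * r, by push_cast; rw [← hpq]; ring⟩
    · exact ⟨p * q' * r, by push_cast; rw [← hpq']; ring⟩
  · rintro ⟨a, ha⟩
    obtain ⟨p, q, hq, hpq⟩ := adic_surj R a
    have hp : (p : K) ≠ 0 := by rw [← hpq]; exact mul_ne_zero ha hq
    refine ⟨⟨(p : K), hp⟩, ?_⟩
    rintro x ⟨y, ⟨r, rfl⟩, z, ⟨s, rfl⟩, rfl⟩
    exact ⟨q * p * r * s, by push_cast; rw [← hpq]; ring⟩
  · rintro x ⟨a, ha⟩
    rcases eq_or_ne x 0 with rfl | hx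
    · exact ⟨⟨a, ha⟩, by rintro y ⟨r, rfl⟩; exact ⟨0, by simp⟩⟩
    · refine ⟨⟨a / x, div_ne_zero ha hx⟩, ?_⟩
      rintro y ⟨r, rfl⟩
      exact ⟨r, by field_simp⟩

private lemma adic_coset_open [Nonempty {a : K // a ≠ 0}] (i : {a : K // a ≠ 0}) (y0 : K) :
    IsOpen[(adic_basis R).topology] {z : K | z - y0 ∈ adicSubgroup R i} := by
  letI := (adic_basis R).topology
  rw [isOpen_iff_mem_nhds]
  intro w hw
  rw [((adic_basis R).hasBasis_nhds w).mem_iff]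
  refine ⟨i, trivial, fun z hz => ?_⟩
  have : z - y0 = (z - w) + (w - y0) := by ring
  rw [Set.mem_setOf_eq, this]
  exact (adicSubgroup R i).add_mem hz hw

end aux

/-- let `R` be a proper henselian local subring of `K` with fraction field
`K`. The `R`-adic topology on `K`, generated by the sets `aR + b` for `a ∈ Kˣ`, `b ∈ K`,
makes `K` a Hausdorff, nondiscrete topological field: addition and multiplication are
continuous (`TopologicalRing`), inversion is continuous away from `0`, the topology is
Hausdorff, and it is not discrete. -/
theorem stmt_10 (K : Type*) [Field K] (R : Subring K) [IsLocalRing R]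
    [HenselianLocalRing R] [IsFractionRing R K] (hR : R ≠ ⊤) :
    ∀ t : TopologicalSpace K,
      t = TopologicalSpace.generateFrom
        {S : Set K | ∃ a b : K, a ≠ 0 ∧ S = {x : K | ∃ r : R, x = a * (r : K) + b}} →
      @IsTopologicalRing K t _ ∧
      @ContinuousOn K K t t (fun x => x⁻¹) {0}ᶜ ∧
      @T2Space K t ∧
      t ≠ ⊥ := by
  intro t ht
  haveI : Nonempty {a : K // a ≠ 0} := ⟨⟨1, one_ne_zero⟩⟩
  set hB := adic_basis R with hBdef
  -- a nonzero nonunit of R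
  obtain ⟨m0, hm0ne, hm0nu⟩ : ∃ m0 : R, (m0 : K) ≠ 0 ∧ ¬IsUnit m0 := by
    by_contra h
    push_neg at h
    apply hR
    ext z
    simp only [Subring.mem_top, iff_true]
    obtain ⟨p, q, hq, hzq⟩ := adic_surj R z
    obtain ⟨u, hu⟩ := h q hq
    have h1 : (q : K) * (((u⁻¹ : (↥R)ˣ) : R) : K) = 1 := by
      have h2 : (q * ((u⁻¹ : (↥R)ˣ) : R) : R) = 1 := by rw [← hu]; simp
      exact_mod_cast congrArg (fun r : R => (r : K)) h2
    have : z = ((p * ((u⁻¹ : (↥R)ˣ) : R) : R) : K) := by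
      rw [Subring.coe_mul, ← hzq, mul_assoc, h1, mul_one]
    rw [this]; exact Subtype.coe_prop _
  -- key coset description of neighborhoods
  have coset_eq : ∀ (i : {a : K // a ≠ 0}) (y : K),
      {z : K | z - y ∈ adicSubgroup R i} = {x : K | ∃ r : R, x = i.1 * (r : K) + y} := by
    intro i y
    ext z
    simp only [Set.mem_setOf_eq, mem_adicSubgroup, sub_eq_iff_eq_add]
  -- identify the topology
  have ht' : t = hB.topology := by
    rw [ht]
    apply le_antisymm
    · rw [TopologicalSpace.le_def]
      intro u hu
      rw [@isOpen_iff_mem_nhds K (generateFrom _) _]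
      intro y hy
      have hun : u ∈ @nhds K hB.topology y := by
        letI := hB.topology
        exact IsOpen.mem_nhds hu hy
      obtain ⟨i, -, hi⟩ := ((hB.hasBasis_nhds y).mem_iff.mp hun)
      rw [@mem_nhds_iff K (generateFrom _) y u]
      refine ⟨{z : K | z - y ∈ adicSubgroup R i}, hi, ?_, by
        simpa using (adicSubgroup R i).zero_mem⟩
      exact TopologicalSpace.isOpen_generateFrom_of_mem ⟨i.1, y, i.2, coset_eq i y⟩
    · apply le_generateFrom
      rintro S ⟨a, b, ha, rfl⟩
      have := adic_coset_open R ⟨a, ha⟩ b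
      rwa [coset_eq] at this
  refine ⟨?_, ?_, ?_, ?_⟩
  · rw [ht']
    exact hB.toRingFilterBasis.isTopologicalRing
  · -- continuity of inversion
    rw [ht']
    letI := hB.topology
    apply continuousOn_of_forall_continuousAt
    intro x hx
    have hx0 : x ≠ 0 := hx
    rw [ContinuousAt, (hB.hasBasis_nhds x).tendsto_iff (hB.hasBasis_nhds x⁻¹)]
    rintro ⟨a, ha⟩ -
    obtain ⟨p, q, hq, hpq⟩ := adic_surj R (a * x)
    have hp : (p : K) ≠ 0 := by rw [← hpq]; exact mul_ne_zero (mul_ne_zero ha hx0) hq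
    refine ⟨⟨a * x ^ 2 * q * m0,
      mul_ne_zero (mul_ne_zero (mul_ne_zero ha (pow_ne_zero 2 hx0)) hq) hm0ne⟩, trivial, ?_⟩
    intro z hz
    obtain ⟨r, hr⟩ := hz
    set m' : R := p * m0 * r with hm'
    have hzx : z = x * (1 + (m' : K)) := by
      have e1 : z = a * x ^ 2 * (q : K) * (m0 : K) * (r : K) + x := eq_add_of_sub_eq hr
      rw [e1, hm']
      push_cast
      rw [← hpq]
      ring
    have hum' : IsUnit (1 + m') := by
      rcases IsLocalRing.isUnit_or_isUnit_one_sub_self (-m') with h | h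
      · exfalso
        apply hm0nu
        have h2 : IsUnit m' := by simpa using h.neg
        rw [hm'] at h2
        have h3 : IsUnit ((m0 : ↥R) * (p * r)) := by
          have : (m0 : ↥R) * (p * r) = p * m0 * r := by ring
          rwa [this]
        exact isUnit_of_mul_isUnit_left h3
      · simpa using h
    obtain ⟨v, hv⟩ := hum'
    have hM : (1 : K) + (m' : K) ≠ 0 := by
      have h1 : (1 + m' : ↥R) ≠ 0 := by rw [← hv]; exact v.ne_zero
      intro h0
      apply h1
      have : ((1 + m' : ↥R) : K) = 0 := by push_cast; exact h0
      exact_mod_cast this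
    have hz0 : z ≠ 0 := by rw [hzx]; exact mul_ne_zero hx0 hM
    set W : K := (((v⁻¹ : (↥R)ˣ) : ↥R) : K) with hWdef
    have hwK : ((1 : K) + (m' : K)) * W = 1 := by
      have h2 : ((1 + m' : ↥R) * ((v⁻¹ : (↥R)ˣ) : ↥R) : ↥R) = 1 := by
        rw [← hv]; exact_mod_cast v.mul_inv
      have h3 := congrArg (fun r : ↥R => (r : K)) h2
      push_cast at h3
      exact h3
    have hzinv : z⁻¹ = x⁻¹ * W := by
      rw [hzx, mul_inv]
      congr 1
      exact inv_eq_of_mul_eq_one_right hwK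
    have hxP : x⁻¹ * (p : K) = a * (q : K) := by
      rw [← hpq]
      field_simp
    refine ⟨-(q * m0 * ((v⁻¹ : (↥R)ˣ) : ↥R) * r), ?_⟩
    have hsK : ((-(q * m0 * ((v⁻¹ : (↥R)ˣ) : ↥R) * r) : ↥R) : K)
        = -((q : K) * (m0 : K) * W * (r : K)) := by push_cast; ring
    rw [hsK, hzinv]
    have hMK : (m' : K) = (p : K) * (m0 : K) * (r : K) := by rw [hm']; push_cast; ring
    rw [hMK] at hwK
    linear_combination x⁻¹ * hwK - ((m0 : K) * (r : K) * W) * hxP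
  · -- Hausdorff
    rw [ht']
    letI := hB.topology
    refine ⟨fun x y hxy => ?_⟩
    have hd : x - y ≠ 0 := sub_ne_zero.mpr hxy
    set i : {a : K // a ≠ 0} := ⟨(x - y) * (m0 : K), mul_ne_zero hd hm0ne⟩ with hidef
    refine ⟨{z : K | z - x ∈ adicSubgroup R i}, {z : K | z - y ∈ adicSubgroup R i},
      adic_coset_open R i x, adic_coset_open R i y, by simp [(adicSubgroup R i).zero_mem],
      by simp [(adicSubgroup R i).zero_mem], ?_⟩
    rw [Set.disjoint_left]
    rintro z ⟨r, hr1⟩ ⟨r', hr2⟩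
    have hr1' : z - x = (x - y) * (m0 : K) * (r : K) := hr1
    have hr2' : z - y = (x - y) * (m0 : K) * (r' : K) := hr2
    have h1 : x - y = (x - y) * (m0 : K) * ((r' : K) - (r : K)) := by
      linear_combination hr2' - hr1'
    have h3 : (1 : K) = (m0 : K) * ((r' : K) - (r : K)) :=
      mul_left_cancel₀ hd (by linear_combination h1)
    have h4 : (m0 * (r' - r) : ↥R) = 1 := by
      have : ((m0 * (r' - r) : ↥R) : K) = ((1 : ↥R) : K) := by push_cast; rw [← h3]
      exact_mod_cast this
    exact hm0nu (IsUnit.of_mul_eq_one _ h4)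
  · -- nondiscrete
    intro hbot
    have hbB : hB.topology = ⊥ := ht' ▸ hbot
    have hpure : @nhds K ⊥ 0 = pure 0 := by
      letI : TopologicalSpace K := ⊥
      haveI : DiscreteTopology K := ⟨rfl⟩
      exact congrFun (nhds_discrete K) 0
    have h0 : ({0} : Set K) ∈ @nhds K hB.topology 0 := by
      rw [hbB, hpure]; exact Set.mem_singleton 0
    obtain ⟨i, -, hi⟩ := hB.hasBasis_nhds_zero.mem_iff.mp h0
    have hmem : i.1 ∈ adicSubgroup R i := ⟨1, by simp⟩
    have := hi hmem
    exact i.2 (by simpa using this)
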